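/- Let p be an odd prime and t ∈ F_p with t² ≠ 4. Let L_p(t) be the group of invertible 2×2 matrices over F_p commuting with D_t = [[0,-1],[1,t]], modulo scalar matrices. Then L_p(t) is cyclic; its order is p - 1 if t² - 4 is a nonzero square in F_p, and p + 1 if t² - 4 is a non-square. -/

import Mathlib

open Matrix

/-- The 2×2 matrices over `ZMod p`. -/
abbrev M2 (p : ℕ) := Matrix (Fin 2) (Fin 2) (ZMod p)

/-- The subgroup of scalar units (nonzero scalar matrices) in `(M2 p)ˣ`. -/
noncomputable def scalarUnits (p : ℕ) : Subgroup (M2 p)ˣ :=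
  (Units.map (algebraMap (ZMod p) (M2 p)).toMonoidHom).range

section
variable {p : ℕ} [Fact (Nat.Prime p)] (t : ZMod p)

def dmat : M2 p := !![0, -1; 1, t]
def cmat (a b : ZMod p) : M2 p := !![a, -b; b, a + t * b]

lemma comm_iff (M : M2 p) : dmat t * M = M * dmat t ↔ M = cmat t (M 0 0) (M 1 0) := by
  simp only [← Matrix.ext_iff, Fin.forall_fin_two, dmat, cmat, Matrix.mul_apply,
    Fin.sum_univ_two, Matrix.of_apply, Matrix.cons_val', Matrix.cons_val_zero,
    Matrix.cons_val_one, Matrix.head_cons, Matrix.head_fin_const, Matrix.empty_val',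
    Matrix.cons_val_fin_one]
  constructor
  · rintro ⟨⟨h1, h2⟩, h3, h4⟩
    refine ⟨⟨trivial, ?_⟩, trivial, ?_⟩
    · linear_combination -h1
    · linear_combination -h3
  · rintro ⟨⟨-, h2⟩, -, h4⟩
    refine ⟨⟨?_, ?_⟩, ?_, ?_⟩
    · linear_combination -h2
    · linear_combination -h4 - t * h2
    · linear_combination -h4
    · linear_combination h2

lemma cmat_mul (a b c d : ZMod p) :
    cmat t a b * cmat t c d = cmat t (a * c - b * d) (a * d + b * c + t * (b * d)) := by
  simp only [cmat, Matrix.mul_fin_two]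
  congr 1 <;> ring

lemma cmat_det (a b : ZMod p) : (cmat t a b).det = a ^ 2 + t * a * b + b ^ 2 := by
  simp [cmat, Matrix.det_fin_two_of]; ring

lemma cmat_00 (a b : ZMod p) : cmat t a b 0 0 = a := by simp [cmat]
lemma cmat_10 (a b : ZMod p) : cmat t a b 1 0 = b := by simp [cmat]

lemma scalar_mat (c : ZMod p) : algebraMap (ZMod p) (M2 p) c = cmat t c 0 := by
  ext i j
  rw [Algebra.algebraMap_eq_smul_one]
  fin_cases i <;> fin_cases j <;> simp [cmat, Matrix.one_fin_two]

lemma mem_centralizer_iff' (Du : (M2 p)ˣ) (hDu : (Du : M2 p) = dmat t) (U : (M2 p)ˣ) :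
    U ∈ Subgroup.centralizer {Du} ↔ (U : M2 p) = cmat t ((U : M2 p) 0 0) ((U : M2 p) 1 0) := by
  rw [Subgroup.mem_centralizer_iff]
  simp only [Set.mem_singleton_iff, forall_eq]
  rw [← comm_iff t]
  constructor
  · intro h
    have := congrArg Units.val h
    rw [Units.val_mul, Units.val_mul, hDu] at this
    exact this
  · intro h
    apply Units.ext
    rw [Units.val_mul, Units.val_mul, hDu]
    exact h

lemma scalar_le_centralizer (Du : (M2 p)ˣ) : scalarUnits p ≤ Subgroup.centralizer {Du} := by
  rintro x ⟨c, rfl⟩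
  rw [Subgroup.mem_centralizer_iff]
  rintro g rfl
  apply Units.ext
  rw [Units.val_mul, Units.val_mul]
  simp only [Units.coe_map, RingHom.toMonoidHom_eq_coe, MonoidHom.coe_coe]
  exact (Algebra.commutes _ _).symm

lemma algebraMap_M2_injective : Function.Injective (algebraMap (ZMod p) (M2 p)) := by
  intro x y h
  have h' : (cmat 0 x 0 : M2 p) = cmat 0 y 0 := by
    rw [← scalar_mat 0 x, ← scalar_mat 0 y]; exact h
  have := congrFun (congrFun h' 0) 0
  simpa [cmat] using this

lemma card_scalarUnits : Nat.card (scalarUnits p) = p - 1 := by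
  have hinj : Function.Injective (Units.map (algebraMap (ZMod p) (M2 p)).toMonoidHom) :=
    Units.map_injective (algebraMap_M2_injective (p := p))
  rw [scalarUnits, ← Nat.card_congr (MonoidHom.ofInjective hinj).toEquiv]
  simp [Nat.card_eq_fintype_card, ZMod.card_units, Nat.totient_prime Fact.out]

end

section
variable {p : ℕ} [Fact (Nat.Prime p)] (t : ZMod p) (Du : (M2 p)ˣ)

-- entries of a centralizer element
def ent0 (U : Subgroup.centralizer {Du}) : ZMod p := ((U : (M2 p)ˣ) : M2 p) 0 0
def ent1 (U : Subgroup.centralizer {Du}) : ZMod p := ((U : (M2 p)ˣ) : M2 p) 1 0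

variable (hDu : (Du : M2 p) = dmat t)
include hDu

lemma rep (U : Subgroup.centralizer {Du}) :
    ((U : (M2 p)ˣ) : M2 p) = cmat t (ent0 Du U) (ent1 Du U) :=
  (mem_centralizer_iff' t Du hDu _).mp U.2

lemma det_ne (U : Subgroup.centralizer {Du}) :
    ent0 Du U ^ 2 + t * ent0 Du U * ent1 Du U + ent1 Du U ^ 2 ≠ 0 := by
  have h1 : IsUnit ((U : (M2 p)ˣ) : M2 p) := Units.isUnit _
  have h2 := (Matrix.isUnit_iff_isUnit_det _).mp h1
  rw [rep t Du hDu U, cmat_det] at h2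
  exact h2.ne_zero

lemma rep_mul (U V : Subgroup.centralizer {Du}) :
    ent0 Du (U * V) = ent0 Du U * ent0 Du V - ent1 Du U * ent1 Du V ∧
    ent1 Du (U * V) = ent0 Du U * ent1 Du V + ent1 Du U * ent0 Du V
      + t * (ent1 Du U * ent1 Du V) := by
  have h : (((U * V : Subgroup.centralizer {Du}) : (M2 p)ˣ) : M2 p)
      = cmat t (ent0 Du U * ent0 Du V - ent1 Du U * ent1 Du V)
        (ent0 Du U * ent1 Du V + ent1 Du U * ent0 Du V + t * (ent1 Du U * ent1 Du V)) := by
    push_cast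
    rw [rep t Du hDu U, rep t Du hDu V, cmat_mul]
  constructor
  · rw [ent0, h, cmat_00]
  · rw [ent1, h, cmat_10]

lemma rep_one : ent0 Du (1 : Subgroup.centralizer {Du}) = 1 ∧
    ent1 Du (1 : Subgroup.centralizer {Du}) = 0 := by
  constructor
  · rw [ent0]; simp
  · rw [ent1]; simp

lemma exists_unit (a b : ZMod p) (h : a ^ 2 + t * a * b + b ^ 2 ≠ 0) :
    ∃ U : Subgroup.centralizer {Du}, ent0 Du U = a ∧ ent1 Du U = b := by
  have hdet : IsUnit (cmat t a b).det := by
    rw [cmat_det]; exact Ne.isUnit h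
  have hu : IsUnit (cmat t a b) := (Matrix.isUnit_iff_isUnit_det _).mpr hdet
  refine ⟨⟨hu.unit, ?_⟩, ?_, ?_⟩
  · rw [mem_centralizer_iff' t Du hDu, hu.unit_spec, cmat_00, cmat_10]
  · rw [ent0]; simp [hu.unit_spec, cmat_00]
  · rw [ent1]; simp [hu.unit_spec, cmat_10]

-- scalar criterion
lemma mem_scalar_iff (U : Subgroup.centralizer {Du}) :
    U ∈ (scalarUnits p).subgroupOf (Subgroup.centralizer {Du}) ↔ ent1 Du U = 0 := by
  rw [Subgroup.mem_subgroupOf]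
  constructor
  · rintro ⟨c, hc⟩
    have : ((U : (M2 p)ˣ) : M2 p) = algebraMap (ZMod p) (M2 p) (c : ZMod p) := by
      rw [← hc]; rfl
    rw [scalar_mat t] at this
    rw [ent1, this, cmat_10]
  · intro hb
    have ha : ent0 Du U ≠ 0 := by
      have := det_ne t Du hDu U
      rw [hb] at this
      intro h0; apply this; rw [h0]; ring
    refine ⟨Units.mk0 (ent0 Du U) ha, ?_⟩
    apply Units.ext
    show algebraMap (ZMod p) (M2 p) (ent0 Du U) = _
    rw [scalar_mat, ← hb, ← rep t Du hDu U]

end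

section
variable {p : ℕ} [Fact (Nat.Prime p)] (t : ZMod p) (Du : (M2 p)ˣ)
  {K : Type} [Field K] [Algebra (ZMod p) K] (θ : K)
  (hθ : θ * θ = algebraMap (ZMod p) K t * θ - 1)
include hθ

lemma normProd2 (a b : ZMod p) :
    (algebraMap (ZMod p) K a + algebraMap (ZMod p) K b * θ) *
      (algebraMap (ZMod p) K a + algebraMap (ZMod p) K b * (algebraMap (ZMod p) K t - θ)) =
      algebraMap (ZMod p) K (a ^ 2 + t * a * b + b ^ 2) := by
  simp only [map_add, _root_.map_mul, map_pow]
  linear_combination (-(algebraMap (ZMod p) K b) ^ 2) * hθ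

lemma phi_ne_zero (a b : ZMod p) (h : a ^ 2 + t * a * b + b ^ 2 ≠ 0) :
    algebraMap (ZMod p) K a + algebraMap (ZMod p) K b * θ ≠ 0 := by
  intro h0
  apply h
  have hn := normProd2 t θ hθ a b
  rw [h0, zero_mul] at hn
  exact (map_eq_zero_iff _ (algebraMap (ZMod p) K).injective).mp hn.symm

variable (hDu : (Du : M2 p) = dmat t)

noncomputable def phi : Subgroup.centralizer {Du} →* Kˣ :=
  MonoidHom.mk'
    (fun U => Units.mk0
      (algebraMap (ZMod p) K (ent0 Du U) + algebraMap (ZMod p) K (ent1 Du U) * θ)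
      (phi_ne_zero t θ hθ _ _ (det_ne t Du hDu U)))
    (by
      intro U V
      apply Units.ext
      simp only [Units.val_mul, Units.val_mk0]
      obtain ⟨h0, h1⟩ := rep_mul t Du hDu U V
      rw [h0, h1]
      simp only [map_add, _root_.map_mul, map_sub]
      linear_combination (-(algebraMap (ZMod p) K (ent1 Du U))
        * (algebraMap (ZMod p) K (ent1 Du V))) * hθ)

lemma phi_val (U : Subgroup.centralizer {Du}) :
    (phi t Du θ hθ hDu U : K) =
      algebraMap (ZMod p) K (ent0 Du U) + algebraMap (ZMod p) K (ent1 Du U) * θ := rfl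

end

theorem scalarUnits_normal (p : ℕ) : (scalarUnits p).Normal := by
  constructor
  rintro n ⟨c, rfl⟩ g
  refine ⟨c, ?_⟩
  apply Units.ext
  have h : (g : M2 p) * (algebraMap (ZMod p) (M2 p) c) * ((g⁻¹ : (M2 p)ˣ) : M2 p)
      = algebraMap (ZMod p) (M2 p) c := by
    rw [← Algebra.commutes (c : ZMod p) (g : M2 p), mul_assoc, Units.mul_inv, mul_one]
  simpa using h.symm

instance scalarUnits_subgroupOf_normal (p : ℕ) (G : Subgroup (M2 p)ˣ) :
    ((scalarUnits p).subgroupOf G).Normal :=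
  (scalarUnits_normal p).subgroupOf G

section case1
variable {p : ℕ} [Fact (Nat.Prime p)] {t : ZMod p} (Du : (M2 p)ˣ)

lemma case1 (hodd : p ≠ 2) (ht : t ^ 2 - 4 ≠ 0) (hDu : (Du : M2 p) = dmat t)
    (r : ZMod p) (hr : t ^ 2 - 4 = r ^ 2) :
    IsCyclic ((Subgroup.centralizer {Du}) ⧸
        ((scalarUnits p).subgroupOf (Subgroup.centralizer {Du}))) ∧
      Nat.card ((Subgroup.centralizer {Du}) ⧸
        ((scalarUnits p).subgroupOf (Subgroup.centralizer {Du}))) = p - 1 := by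
  have h2 : (2 : ZMod p) ≠ 0 := by
    intro h
    have := (ZMod.natCast_eq_zero_iff 2 p).mp (by exact_mod_cast h)
    exact hodd ((Nat.prime_dvd_prime_iff_eq Fact.out Nat.prime_two).mp this)
  have hrne : r ≠ 0 := by
    intro h; apply ht; rw [hr, h]; ring
  set α : ZMod p := (t + r) / 2 with hα
  set β : ZMod p := (t - r) / 2 with hβ
  have hid : ∀ x : ZMod p, algebraMap (ZMod p) (ZMod p) x = x := fun x => rfl
  have hθα : α * α = algebraMap (ZMod p) (ZMod p) t * α - 1 := by
    rw [hid, hα]; field_simp; linear_combination -hr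
  have hθβ : β * β = algebraMap (ZMod p) (ZMod p) t * β - 1 := by
    rw [hid, hβ]; field_simp; linear_combination -hr
  have hαβ : α - β = r := by rw [hα, hβ]; field_simp; ring
  have hαβ' : t - α = β := by rw [hα, hβ]; field_simp; ring
  set Φα := phi t Du α hθα hDu with hΦα
  set Φβ := phi t Du β hθβ hDu with hΦβ
  set Φ : Subgroup.centralizer {Du} →* (ZMod p)ˣ :=
    MonoidHom.mk' (fun U => Φα U * (Φβ U)⁻¹) (by
      intro U V
      show Φα (U * V) * (Φβ (U * V))⁻¹ = Φα U * (Φβ U)⁻¹ * (Φα V * (Φβ V)⁻¹)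
      rw [_root_.map_mul, _root_.map_mul, mul_inv]
      exact mul_mul_mul_comm _ _ _ _) with hΦ
  have hΦval : ∀ U, (Φ U : ZMod p) = (ent0 Du U + ent1 Du U * α) * (ent0 Du U + ent1 Du U * β)⁻¹ := by
    intro U
    rw [hΦ]
    show ((Φα U * (Φβ U)⁻¹ : (ZMod p)ˣ) : ZMod p) = _
    rw [Units.val_mul, Units.val_inv_eq_inv_val, hΦα, hΦβ, phi_val, phi_val]
    simp only [hid]
  have hker : Φ.ker = (scalarUnits p).subgroupOf (Subgroup.centralizer {Du}) := by
    ext U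
    rw [MonoidHom.mem_ker, mem_scalar_iff t Du hDu]
    constructor
    · intro h
      have hv := congrArg (Units.val) h
      rw [hΦval, Units.val_one] at hv
      have hβne : (ent0 Du U + ent1 Du U * β) ≠ 0 := by
        have := phi_ne_zero t β hθβ _ _ (det_ne t Du hDu U)
        simpa [hid] using this
      rw [mul_inv_eq_one₀ hβne] at hv
      have hv' : ent1 Du U * r = 0 := by rw [← hαβ]; linear_combination hv
      exact (mul_eq_zero.mp hv').resolve_right hrne
    · intro hb
      have ha : ent0 Du U ≠ 0 := by
        have h3 := det_ne t Du hDu U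
        rw [hb] at h3
        intro h0; apply h3; rw [h0]; ring
      apply Units.ext
      rw [hΦval, hb, Units.val_one]
      simp only [zero_mul, add_zero]
      exact mul_inv_cancel₀ ha
  have hsurj : Function.Surjective Φ := by
    intro u
    have hc : ((u : ZMod p)) ≠ 0 := Units.ne_zero u
    set b := ((u : ZMod p) - 1) / r with hbdef
    set a := 1 - b * β with hadef
    have hab : b * α - b * β = (u : ZMod p) - 1 := by
      rw [← mul_sub, hαβ, hbdef]; field_simp
    have hA : a + b * α = (u : ZMod p) := by
      rw [hadef]; linear_combination hab
    have hB : a + b * β = 1 := by rw [hadef]; ring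
    have hN : a ^ 2 + t * a * b + b ^ 2 ≠ 0 := by
      have hnp := normProd2 (K := ZMod p) t α hθα a b
      simp only [hid] at hnp
      rw [hαβ', hA, hB, mul_one] at hnp
      rw [← hnp]
      exact hc
    obtain ⟨U, hU0, hU1⟩ := exists_unit t Du hDu a b hN
    refine ⟨U, ?_⟩
    apply Units.ext
    rw [hΦval, hU0, hU1, hA, hB, inv_one, mul_one]
  let e := (QuotientGroup.quotientMulEquivOfEq hker.symm).trans
    (QuotientGroup.quotientKerEquivOfSurjective Φ hsurj)
  refine ⟨isCyclic_of_surjective e.symm e.symm.surjective, ?_⟩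
  rw [Nat.card_congr e.toEquiv, Nat.card_eq_fintype_card, ZMod.card_units]

end case1

section case2
open Polynomial in
lemma case2 {p : ℕ} [Fact (Nat.Prime p)] {t : ZMod p} (Du : (M2 p)ˣ)
    (hodd : p ≠ 2) (ht : t ^ 2 - 4 ≠ 0) (hDu : (Du : M2 p) = dmat t)
    (hnsq : ¬ ∃ r : ZMod p, t ^ 2 - 4 = r ^ 2) :
    IsCyclic ((Subgroup.centralizer {Du}) ⧸
        ((scalarUnits p).subgroupOf (Subgroup.centralizer {Du}))) ∧
      Nat.card ((Subgroup.centralizer {Du}) ⧸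
        ((scalarUnits p).subgroupOf (Subgroup.centralizer {Du}))) = p + 1 := by
  have hroot : ∀ z : ZMod p, z ^ 2 - t * z + 1 ≠ 0 := by
    intro z h
    exact hnsq ⟨2 * z - t, by linear_combination -4 * h⟩
  set g : (ZMod p)[X] := X ^ 2 - C t * X + 1 with hg
  have hmonic : g.Monic := by
    have h0 : g = X ^ 2 + (C (-t) * X + C 1) := by rw [hg]; simp; ring
    rw [h0]
    apply monic_X_pow_add
    apply lt_of_le_of_lt degree_linear_le
    norm_num
  have hdeg : g.natDegree = 2 := by
    have : g = C 1 * X ^ 2 + C (-t) * X + C 1 := by rw [hg]; simp; ring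
    rw [this, natDegree_quadratic one_ne_zero]
  have hirr : Irreducible g := by
    rw [hmonic.irreducible_iff_roots_eq_zero_of_degree_le_three (by omega) (by omega)]
    rw [Multiset.eq_zero_iff_forall_notMem]
    intro z hz
    rw [mem_roots hmonic.ne_zero] at hz
    apply hroot z
    have hev : g.eval z = 0 := hz
    rw [hg] at hev
    simpa using hev
  haveI : Fact (Irreducible g) := ⟨hirr⟩
  set K := AdjoinRoot g with hK
  set θ : K := AdjoinRoot.root g with hθdef
  have hθ : θ * θ = algebraMap (ZMod p) K t * θ - 1 := by
    have h0 := AdjoinRoot.eval₂_root g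
    rw [hg] at h0
    simp only [eval₂_add, eval₂_sub, eval₂_mul, eval₂_pow, eval₂_X, eval₂_C, eval₂_one] at h0
    rw [AdjoinRoot.algebraMap_eq]
    linear_combination h0
  have hinj : Function.Injective (algebraMap (ZMod p) K) := (algebraMap (ZMod p) K).injective
  have hnotin : ∀ c : ZMod p, algebraMap (ZMod p) K c ≠ θ := by
    intro c hc
    have h0 := AdjoinRoot.eval₂_root g
    rw [← AdjoinRoot.algebraMap_eq, ← hθdef, ← hc, eval₂_hom] at h0
    have hev : g.eval c = 0 := hinj (by rw [h0]; exact (map_zero _).symm)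
    apply hroot c
    rw [hg] at hev
    simpa using hev
  set φ := phi t Du θ hθ hDu with hφ
  set S : Subgroup Kˣ := (Units.map (algebraMap (ZMod p) K).toMonoidHom).range with hS
  haveI hSnormal : S.Normal := Subgroup.normal_of_comm S
  set Φ := (QuotientGroup.mk' S).comp φ with hΦ
  have hker : Φ.ker = (scalarUnits p).subgroupOf (Subgroup.centralizer {Du}) := by
    ext U
    rw [MonoidHom.mem_ker, hΦ, MonoidHom.comp_apply, QuotientGroup.mk'_apply,
      QuotientGroup.eq_one_iff, mem_scalar_iff t Du hDu]
    constructor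
    · rintro ⟨c, hc⟩
      by_contra hb
      apply hnotin ((((c : (ZMod p)ˣ) : ZMod p) - ent0 Du U) / ent1 Du U)
      have hcv := congrArg Units.val hc
      simp only [Units.coe_map, RingHom.toMonoidHom_eq_coe, MonoidHom.coe_coe] at hcv
      rw [hφ, phi_val] at hcv
      have hbK : algebraMap (ZMod p) K (ent1 Du U) ≠ 0 := fun h =>
        hb (hinj (by rw [h, map_zero]))
      rw [map_div₀, map_sub]
      rw [div_eq_iff hbK]
      linear_combination hcv
    · intro hb
      have ha : ent0 Du U ≠ 0 := by
        have h3 := det_ne t Du hDu U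
        rw [hb] at h3
        intro h0; apply h3; rw [h0]; ring
      refine ⟨Units.mk0 (ent0 Du U) ha, ?_⟩
      apply Units.ext
      simp only [Units.coe_map, RingHom.toMonoidHom_eq_coe, MonoidHom.coe_coe]
      rw [hφ, phi_val, hb, map_zero, zero_mul, add_zero]
      rfl
  have hg0 : g ≠ 0 := hmonic.ne_zero
  haveI : Module.Finite (ZMod p) K := Module.Finite.of_basis (AdjoinRoot.powerBasis hg0).basis
  haveI : Finite K := Module.finite_of_finite (ZMod p)
  haveI : IsCyclic (Kˣ ⧸ S) := isCyclic_of_surjective _ (QuotientGroup.mk'_surjective S)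
  let e := (QuotientGroup.quotientMulEquivOfEq hker.symm).trans
    (QuotientGroup.quotientKerEquivRange Φ)
  refine ⟨isCyclic_of_surjective e.symm e.symm.surjective, ?_⟩
  have hNnz : ∀ a b : ZMod p, (a, b) ≠ ((0 : ZMod p), (0 : ZMod p)) →
      a ^ 2 + t * a * b + b ^ 2 ≠ 0 := by
    intro a b hab h
    by_cases hb : b = 0
    · subst hb
      have ha : a = 0 := by
        have : a ^ 2 = 0 := by linear_combination h
        exact pow_eq_zero_iff (n := 2) (by norm_num) |>.mp this
      exact hab (by rw [ha])
    · apply hroot (-(a / b))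
      field_simp
      linear_combination h
  have hcardG : Nat.card (Subgroup.centralizer {Du} : Subgroup (M2 p)ˣ) = p * p - 1 := by
    have hne : ∀ U : (Subgroup.centralizer {Du} : Subgroup (M2 p)ˣ),
        ((ent0 Du U, ent1 Du U) : ZMod p × ZMod p) ≠ ((0 : ZMod p), (0 : ZMod p)) := by
      intro U h
      have h3 := det_ne t Du hDu U
      rw [Prod.mk.injEq] at h
      apply h3; rw [h.1, h.2]; ring
    have e2 : (Subgroup.centralizer {Du} : Subgroup (M2 p)ˣ) ≃
        {v : ZMod p × ZMod p // v ≠ ((0 : ZMod p), (0 : ZMod p))} := by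
      refine Equiv.ofBijective (fun U => ⟨(ent0 Du U, ent1 Du U), hne U⟩) ⟨?_, ?_⟩
      · intro U V h
        have h1 := congrArg Subtype.val h
        rw [Prod.mk.injEq] at h1
        apply Subtype.ext; apply Units.ext
        rw [rep t Du hDu U, rep t Du hDu V, h1.1, h1.2]
      · rintro ⟨⟨a, b⟩, hv⟩
        obtain ⟨U, h0, h1⟩ := exists_unit t Du hDu a b (hNnz a b hv)
        exact ⟨U, by simp [h0, h1]⟩
    rw [Nat.card_congr e2, Nat.card_eq_fintype_card]
    rw [Fintype.card_subtype_compl]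
    simp [Fintype.card_subtype_eq, ZMod.card]
  have hcardS : Nat.card ((scalarUnits p).subgroupOf (Subgroup.centralizer {Du})) = p - 1 := by
    rw [Nat.card_congr (Subgroup.subgroupOfEquivOfLe (scalar_le_centralizer Du)).toEquiv]
    exact card_scalarUnits
  have hq := Subgroup.card_eq_card_quotient_mul_card_subgroup
    ((scalarUnits p).subgroupOf (Subgroup.centralizer {Du}))
  rw [hcardG, hcardS] at hq
  have hp2 : 2 ≤ p := (Fact.out : p.Prime).two_le
  have hp3 : 3 ≤ p := by omega
  have key : p * p - 1 = (p + 1) * (p - 1) := by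
    zify [show 1 ≤ p by omega, show 1 ≤ p * p from Nat.one_le_iff_ne_zero.mpr (by positivity)]
    ring
  rw [key] at hq
  exact (Nat.eq_of_mul_eq_mul_right (show 0 < p - 1 by omega) hq.symm)
end case2


theorem stmt_15 (p : ℕ) [Fact (Nat.Prime p)] (hodd : p ≠ 2)
    (t : ZMod p) (ht : t ^ 2 - 4 ≠ 0)
    (Du : (M2 p)ˣ) (hDu : (Du : M2 p) = !![0, -1; 1, t]) :
    IsCyclic ((Subgroup.centralizer {Du}) ⧸
        ((scalarUnits p).subgroupOf (Subgroup.centralizer {Du}))) ∧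
      ((∃ r : ZMod p, r ≠ 0 ∧ t ^ 2 - 4 = r ^ 2) →
        Nat.card ((Subgroup.centralizer {Du}) ⧸
          ((scalarUnits p).subgroupOf (Subgroup.centralizer {Du}))) = p - 1) ∧
      ((¬ ∃ r : ZMod p, t ^ 2 - 4 = r ^ 2) →
        Nat.card ((Subgroup.centralizer {Du}) ⧸
          ((scalarUnits p).subgroupOf (Subgroup.centralizer {Du}))) = p + 1) := by
  have hDu' : (Du : M2 p) = dmat t := hDu
  by_cases hsq : ∃ r : ZMod p, t ^ 2 - 4 = r ^ 2
  · obtain ⟨r, hr⟩ := hsq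
    obtain ⟨hc, hcard⟩ := case1 Du hodd ht hDu' r hr
    exact ⟨hc, fun _ => hcard, fun h => absurd ⟨r, hr⟩ h⟩
  · obtain ⟨hc, hcard⟩ := case2 Du hodd ht hDu' hsq
    exact ⟨hc, fun ⟨r, _, hr⟩ => absurd ⟨r, hr⟩ hsq, fun _ => hcard⟩
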